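/- Let A and B be Banach algebras and T ∈ hom(B, A). Every character χ on A ×_T B is either of the form χ(a,b) = φ(a) + φ(T(b)) for a unique character φ on A, or of the form χ(a,b) = ψ(b) for a unique character ψ on B, and these two families are disjoint. Hence σ(A ×_T B) = {(φ, φ∘T) : φ ∈ σ(A)} ∪ {(0, ψ) : ψ ∈ σ(B)} as a disjoint union. -/

import Mathlib

open ContinuousLinearMap NormedSpace

variable {A B : Type*}
  [NonUnitalNormedRing A] [NormedSpace ℂ A] [IsScalarTower ℂ A A] [SMulCommClass ℂ A A]
  [CompleteSpace A]
  [NonUnitalNormedRing B] [NormedSpace ℂ B] [IsScalarTower ℂ B B] [SMulCommClass ℂ B B]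
  [CompleteSpace B]

/-- The morphism-product multiplication on `A × B`:
`(a₁,b₁)·(a₂,b₂) = (a₁a₂ + a₁T(b₂) + T(b₁)a₂, b₁b₂)`. -/
noncomputable def tMul (T : B →L[ℂ] A) (u v : A × B) : A × B :=
  (u.1 * v.1 + u.1 * T v.2 + T u.2 * v.1, u.2 * v.2)

/-- The ℓ¹ norm `‖(a,b)‖ = ‖a‖ + ‖b‖` on `A × B`. -/
noncomputable def tNorm (u : A × B) : ℝ := ‖u.1‖ + ‖u.2‖

/-- Auxiliary map: for `Φ` in the second dual of `E` and a bundled bilinear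
multiplication `M` on `E`, this is `f ↦ (a ↦ Φ (f ∘ M a))`, i.e. `f ↦ Φ · f`. -/
noncomputable def rAct {E : Type*} [NormedAddCommGroup E] [NormedSpace ℂ E]
    (M : E →L[ℂ] E →L[ℂ] E) (Φ : StrongDual ℂ (StrongDual ℂ E)) : StrongDual ℂ E →L[ℂ] StrongDual ℂ E :=
  (compL ℂ E (StrongDual ℂ E) ℂ Φ).comp
    (((compL ℂ E (E →L[ℂ] E) (StrongDual ℂ E)).flip M).comp (compL ℂ E E ℂ))

/-- The first Arens product `Φ □ Ψ` on the second dual of `E`, where the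
multiplication of `E` is given by the bundled bilinear map `M`:
`⟨Φ□Ψ, f⟩ = ⟨Φ, Ψ·f⟩` with `(Ψ·f)(a) = Ψ(f·a)` and `(f·a)(x) = f(ax)`. -/
noncomputable def arens1 {E : Type*} [NormedAddCommGroup E] [NormedSpace ℂ E]
    (M : E →L[ℂ] E →L[ℂ] E) (Φ Ψ : StrongDual ℂ (StrongDual ℂ E)) : StrongDual ℂ (StrongDual ℂ E) :=
  Φ.comp (rAct M Ψ)

/-- The second Arens product `Φ ◊ Ψ` on the second dual of `E`:
`⟨Φ◊Ψ, f⟩ = ⟨Ψ, f·Φ⟩` with `(f·Φ)(a) = Φ(a·f)` and `(a·f)(x) = f(xa)`. -/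
noncomputable def arens2 {E : Type*} [NormedAddCommGroup E] [NormedSpace ℂ E]
    (M : E →L[ℂ] E →L[ℂ] E) (Φ Ψ : StrongDual ℂ (StrongDual ℂ E)) : StrongDual ℂ (StrongDual ℂ E) :=
  Ψ.comp (rAct M.flip Φ)

/-- Bundled bilinear map `(u,v) ↦ M (f u) (g v)`. -/
noncomputable def bcomp {P E : Type*} [NormedAddCommGroup P] [NormedSpace ℂ P]
    [NormedAddCommGroup E] [NormedSpace ℂ E]
    (M : E →L[ℂ] E →L[ℂ] E) (f g : P →L[ℂ] E) : P →L[ℂ] P →L[ℂ] E :=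
  ((compL ℂ P E E).flip g).comp (M.comp f)

/-- The morphism-product multiplication `tMul T`, as a bundled bilinear map;
`tMulCLM T u v = tMul T u v`. -/
noncomputable def tMulCLM (T : B →L[ℂ] A) : (A × B) →L[ℂ] (A × B) →L[ℂ] (A × B) :=
  ((compL ℂ (A × B) A (A × B) (inl ℂ A B)).comp
    (bcomp (mul ℂ A) (fst ℂ A B) (fst ℂ A B + T.comp (snd ℂ A B)) +
     bcomp (mul ℂ A) (T.comp (snd ℂ A B)) (fst ℂ A B))) +
  ((compL ℂ (A × B) B (A × B) (inr ℂ A B)).comp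
    (bcomp (mul ℂ B) (snd ℂ A B) (snd ℂ A B)))

/-- The adjoint `T' : A' → B'`, `T'(f) = f ∘ T`. -/
noncomputable def dualT (T : B →L[ℂ] A) : StrongDual ℂ A →L[ℂ] StrongDual ℂ B := (compL ℂ B A ℂ).flip T

/-- The double adjoint `T'' : B'' → A''`, `T''(F) = F ∘ T'`. -/
noncomputable def ddT (T : B →L[ℂ] A) : StrongDual ℂ (StrongDual ℂ B) →L[ℂ] StrongDual ℂ (StrongDual ℂ A) :=
  (compL ℂ (StrongDual ℂ A) (StrongDual ℂ B) ℂ).flip (dualT T)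

/-- The identification `Θ : A'' × B'' → (A × B)''`, `Θ(Φ,Ψ)(F) = Φ(F∘inl) + Ψ(F∘inr)`,
i.e. `Θ(Φ,Ψ)(f,g) = Φ(f) + Ψ(g)` under the identification `(A × B)' ≅ A' × B'`. -/
noncomputable def Theta (Φ : StrongDual ℂ (StrongDual ℂ A)) (Ψ : StrongDual ℂ (StrongDual ℂ B)) :
    StrongDual ℂ (StrongDual ℂ (A × B)) :=
  Φ.comp ((compL ℂ A (A × B) ℂ).flip (inl ℂ A B)) +
  Ψ.comp ((compL ℂ B (A × B) ℂ).flip (inr ℂ A B))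

/-- The functional `(a,b) ↦ φ(a) + φ(T(b))` on `A × B`, for `φ : A → ℂ`. -/
noncomputable def charExt (T : B →L[ℂ] A) (φ : A →L[ℂ] ℂ) : (A × B) →L[ℂ] ℂ :=
  φ.comp (fst ℂ A B) + (φ.comp T).comp (snd ℂ A B)

/-- The functional `(a,b) ↦ ψ(b)` on `A × B`, for `ψ : B → ℂ`. -/
noncomputable def charSnd (ψ : B →L[ℂ] ℂ) : (A × B) →L[ℂ] ℂ :=
  ψ.comp (snd ℂ A B)

/-- every character `χ` on `A ×_T B` arises either from a unique
character `φ` on `A` as `χ(a,b) = φ(a) + φ(T(b))`, or from a unique character `ψ`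
on `B` as `χ(a,b) = ψ(b)`, and these two families are disjoint. -/
theorem character_space_characterization
    (T : B →L[ℂ] A) (hT : ∀ x y, T (x * y) = T x * T y) (hTn : ‖T‖ ≤ 1)
    (χ : (A × B) →L[ℂ] ℂ) (hχ0 : χ ≠ 0)
    (hχm : ∀ u v : A × B, χ (tMul T u v) = χ u * χ v) :
    Xor'
      (∃! φ : A →L[ℂ] ℂ,
        (φ ≠ 0 ∧ ∀ x y : A, φ (x * y) = φ x * φ y) ∧
          ∀ (a : A) (b : B), χ (a, b) = φ a + φ (T b))
      (∃! ψ : B →L[ℂ] ℂ,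
        (ψ ≠ 0 ∧ ∀ x y : B, ψ (x * y) = ψ x * ψ y) ∧
          ∀ (a : A) (b : B), χ (a, b) = ψ b) := by
  set φ : A →L[ℂ] ℂ := χ.comp (inl ℂ A B) with hφdef
  set ψ : B →L[ℂ] ℂ := χ.comp (inr ℂ A B) with hψdef
  have hφa : ∀ a : A, φ a = χ (a, 0) := fun a => rfl
  have hψb : ∀ b : B, ψ b = χ (0, b) := fun b => rfl
  have hsplit : ∀ (a : A) (b : B), χ (a, b) = φ a + ψ b := by
    intro a b
    have h : (a, b) = (a, (0:B)) + ((0:A), b) := by simp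
    rw [h, map_add, hφa, hψb]
  have hmulA : ∀ x y : A, φ (x * y) = φ x * φ y := by
    intro x y
    have := hχm (x, 0) (y, 0)
    simpa [tMul, hφa] using this
  have hmulB : ∀ x y : B, ψ (x * y) = ψ x * ψ y := by
    intro x y
    have := hχm ((0:A), x) ((0:A), y)
    simpa [tMul, hψb] using this
  have hmix : ∀ (x : A) (b : B), φ (x * T b) = φ x * ψ b := by
    intro x b
    have := hχm (x, 0) ((0:A), b)
    simpa [tMul, hφa, hψb] using this
  by_cases hφ : φ = 0
  · -- right case
    have hψ0 : ψ ≠ 0 := by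
      intro hψ
      refine hχ0 (ContinuousLinearMap.ext fun u => ?_)
      have := hsplit u.1 u.2
      simp [hφ, hψ] at this
      simpa using this
    refine Or.inr ⟨⟨ψ, ⟨⟨hψ0, hmulB⟩, fun a b => by
        rw [hsplit a b, hφ]; simp⟩, ?_⟩, ?_⟩
    · intro ψ' ⟨_, hψ'⟩
      ext b
      have := hψ' 0 b
      rw [hψb b, this]
    · rintro ⟨φ', ⟨⟨hφ'0, _⟩, hφ'⟩, _⟩
      apply hφ'0
      ext a
      have h1 := hφ' a 0
      have h2 := hsplit a (0:B)
      rw [hφ] at h2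
      simp at h1 h2
      rw [h1] at h2
      simpa using h2
  · -- left case
    obtain ⟨a₀, ha₀⟩ : ∃ a, φ a ≠ 0 := by
      by_contra h
      push_neg at h
      exact hφ (ContinuousLinearMap.ext h)
    have hψT : ∀ b : B, ψ b = φ (T b) := by
      intro b
      have h1 := hmix a₀ b
      have h2 := hmulA a₀ (T b)
      rw [h2] at h1
      exact (mul_left_cancel₀ ha₀ h1.symm)
    refine Or.inl ⟨⟨φ, ⟨⟨hφ, hmulA⟩, fun a b => by rw [hsplit a b, hψT b]⟩, ?_⟩, ?_⟩
    · intro φ' ⟨_, hφ'⟩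
      ext a
      have := hφ' a 0
      simp at this
      rw [hφa a, this]
    · rintro ⟨ψ', ⟨⟨_, _⟩, hψ'⟩, _⟩
      apply hφ
      ext a
      have h1 := hψ' a 0
      have h2 := hsplit a (0:B)
      rw [h1] at h2
      simp at h2
      simpa using h2.symm
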